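/- Let β ∈ (0, ‖B‖^{−1/2}) and ω ∈ (0, κ(B)^{−1/2}(1 − ‖B‖β²)^{1/2}]. Let w ∈ H and let Λ₀ ⊆ 𝒥 be a finite set with supp w ⊆ Λ₀. Then for every finite set Λ̄ ⊆ 𝒥 for which there exists v ∈ H with supp v ⊆ Λ̄ and ‖u − v‖ ≤ β‖u − w‖_B, the set Λ := Λ₀ ∪ Λ̄ satisfies ‖(B w − f)|_Λ‖ ≥ ω‖B w − f‖. In particular, the smallest such Dörfler set Λ ⊇ Λ₀ satisfies #(Λ \ Λ₀) ≤ #Λ̄. -/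

import Mathlib

open scoped RealInnerProductSpace

open Classical in
/-- Coordinatewise restriction of an element of `ℓ²(𝒥)` to a subset `Λ ⊆ 𝒥`
(entries outside `Λ` set to zero). -/
noncomputable def restr {J : Type*} (Λ : Set J) (v : lp (fun _ : J => ℝ) 2) :
    lp (fun _ : J => ℝ) 2 :=
  ⟨fun i => if i ∈ Λ then v i else 0, by
    have hv : Memℓp (fun i => v i) 2 := lp.memℓp v
    have : Memℓp (fun i => if i ∈ Λ then v i else 0) 2 := by
      rw [memℓp_gen_iff (by norm_num)] at hv ⊢
      refine Summable.of_nonneg_of_le (fun i => ?_) (fun i => ?_) hv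
      · positivity
      · by_cases h : i ∈ Λ <;> simp [h] <;> positivity
    exact this⟩

/-- Cauchy–Schwarz for a symmetric positive semidefinite bilinear form given by `A`. -/
lemma sym_form_cs {E : Type*} [NormedAddCommGroup E] [InnerProductSpace ℝ E]
    (A : E →L[ℝ] E) (hsym : ∀ x y, ⟪A x, y⟫ = ⟪x, A y⟫) (hpos : ∀ x, 0 ≤ ⟪A x, x⟫)
    (x y : E) : ⟪A x, y⟫ ^ 2 ≤ ⟪A x, x⟫ * ⟪A y, y⟫ := by
  have h : ∀ t : ℝ, 0 ≤ ⟪A y, y⟫ * (t * t) + (2 * ⟪A x, y⟫) * t + ⟪A x, x⟫ := by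
    intro t
    have h0 := hpos (x + t • y)
    have hexp : ⟪A (x + t • y), x + t • y⟫ =
        ⟪A y, y⟫ * (t * t) + (2 * ⟪A x, y⟫) * t + ⟪A x, x⟫ := by
      have hyx : ⟪A y, x⟫ = ⟪A x, y⟫ := by
        rw [hsym y x, real_inner_comm]
      simp only [map_add, map_smul, inner_add_left, inner_add_right, inner_smul_left,
        inner_smul_right, RCLike.ofReal_real_eq_id, id, starRingEnd_apply, star_trivial]
      rw [hyx]
      ring
    linarith [hexp ▸ h0]
  have := discrim_le_zero h
  rw [discrim] at this
  nlinarith [this]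

/-- `‖A x‖² ≤ ‖A‖ ⟪A x, x⟫` for a symmetric positive semidefinite `A`. -/
lemma sym_norm_sq_le {E : Type*} [NormedAddCommGroup E] [InnerProductSpace ℝ E]
    (A : E →L[ℝ] E) (hsym : ∀ x y, ⟪A x, y⟫ = ⟪x, A y⟫) (hpos : ∀ x, 0 ≤ ⟪A x, x⟫)
    (x : E) : ‖A x‖ ^ 2 ≤ ‖A‖ * ⟪A x, x⟫ := by
  have hcs := sym_form_cs A hsym hpos x (A x)
  have h1 : ⟪A x, A x⟫ = ‖A x‖ ^ 2 := real_inner_self_eq_norm_sq (A x)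
  have h2 : ⟪A (A x), A x⟫ ≤ ‖A‖ * ‖A x‖ ^ 2 := by
    calc ⟪A (A x), A x⟫ ≤ ‖A (A x)‖ * ‖A x‖ := real_inner_le_norm _ _
      _ ≤ (‖A‖ * ‖A x‖) * ‖A x‖ := by
          gcongr; exact A.le_opNorm _
      _ = ‖A‖ * ‖A x‖ ^ 2 := by ring
  rcases eq_or_lt_of_le (norm_nonneg (A x)) with h0 | h0
  · have h0' : ‖A x‖ = 0 := h0.symm
    rw [h0']
    simpa using mul_nonneg (norm_nonneg A) (hpos x)
  · have hx := hpos x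
    have h3 : ⟪A x, x⟫ * ⟪A (A x), A x⟫ ≤ ⟪A x, x⟫ * (‖A‖ * ‖A x‖ ^ 2) :=
      mul_le_mul_of_nonneg_left h2 hx
    nlinarith [h3, hcs, h1, mul_pos h0 h0]

open Classical in
lemma restr_apply' {J : Type*} (Λ : Set J) (v : lp (fun _ : J => ℝ) 2) (i : J) :
    restr Λ v i = if i ∈ Λ then v i else 0 := rfl

lemma inner_restr' {J : Type*} (Λ : Set J) (x z : lp (fun _ : J => ℝ) 2)
    (hz : ∀ i ∉ Λ, z i = 0) : ⟪restr Λ x, z⟫ = ⟪x, z⟫ := by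
  rw [lp.inner_eq_tsum, lp.inner_eq_tsum]
  refine tsum_congr fun i => ?_
  by_cases h : i ∈ Λ
  · rw [restr_apply', if_pos h]
  · rw [hz i h, inner_zero_right, inner_zero_right]

/-- Pure arithmetic for the one-dimensional minimization step. -/
lemma key_arith (E T D bb : ℝ) (hD : 0 < D) (h : E - 2 * T + D ≤ bb) :
    E - bb ≤ T / D * (T / D) * D := by
  have heq : T / D * (T / D) * D = T ^ 2 / D := by
    field_simp
  have h1 : 2 * T - D ≤ T ^ 2 / D := by
    rw [le_div_iff₀ hD]
    nlinarith [sq_nonneg (T - D)]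
  rw [heq]
  linarith

/-- Pure arithmetic for the final Dörfler estimate. -/
lemma dorfler_arith (ω nB nI c E Z N R zn : ℝ)
    (hnI : 0 < nI) (hE : 0 ≤ E) (hω0 : 0 ≤ ω) (hN : 0 ≤ N)
    (hR0 : 0 ≤ R) (hzn0 : 0 ≤ zn)
    (hω2 : ω ^ 2 * (nB * nI) ≤ c)
    (hR : R ^ 2 ≤ nB * E)
    (hZ : c * E ≤ Z) (hZpos : 0 < Z)
    (hCS : Z ≤ N * zn) (hzn : zn ^ 2 ≤ nI * Z) :
    ω * R ≤ N := by
  have hA : Z * Z ≤ (N * zn) * (N * zn) := mul_self_le_mul_self hZpos.le hCS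
  have hB : N ^ 2 * zn ^ 2 ≤ N ^ 2 * (nI * Z) :=
    mul_le_mul_of_nonneg_left hzn (sq_nonneg N)
  have hZle : Z ≤ N ^ 2 * nI := by nlinarith [hA, hB, hZpos]
  have h2 : ω ^ 2 * nI * R ^ 2 ≤ ω ^ 2 * nI * (nB * E) :=
    mul_le_mul_of_nonneg_left hR (by positivity)
  have h3 : ω ^ 2 * (nB * nI) * E ≤ c * E := mul_le_mul_of_nonneg_right hω2 hE
  have hfin : (ω * R) ^ 2 * nI ≤ N ^ 2 * nI := by nlinarith [h2, h3, hZ, hZle]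
  have hsq : (ω * R) ^ 2 ≤ N ^ 2 := le_of_mul_le_mul_right (by linarith) hnI
  have := Real.sqrt_le_sqrt hsq
  rwa [Real.sqrt_sq (by positivity), Real.sqrt_sq hN] at this

set_option maxHeartbeats 1000000 in
/-- Lemma 5.2 of the paper.  With `B` bounded, self-adjoint and elliptic on `H = ℓ²(𝒥)`,
boundedly invertible with inverse `Binv`, `κ(B) = ‖B‖·‖B⁻¹‖`, and `u = B⁻¹f`:
let `β ∈ (0, ‖B‖^{−1/2})`, `ω ∈ (0, κ(B)^{−1/2}(1 − ‖B‖β²)^{1/2}]`, `w ∈ H`, and let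
`Λ₀` be finite with `supp w ⊆ Λ₀`.  Then for every finite `Λ̄` admitting `v` with
`supp v ⊆ Λ̄` and `‖u − v‖ ≤ β‖u − w‖_B`, the set `Λ = Λ₀ ∪ Λ̄` satisfies the Dörfler
property `‖(Bw − f)|_Λ‖ ≥ ω‖Bw − f‖` and `#(Λ \ Λ₀) ≤ #Λ̄`; in particular any smallest
Dörfler set `Λ ⊇ Λ₀` satisfies `#(Λ \ Λ₀) ≤ #Λ̄`. -/
theorem stmt_14 {J : Type*} [Countable J] [DecidableEq J]
    (B Binv : lp (fun _ : J => ℝ) 2 →L[ℝ] lp (fun _ : J => ℝ) 2)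
    (rB RB : ℝ) (hrB : 0 < rB) (hrRB : rB ≤ RB)
    (hsa : ∀ x y, ⟪B x, y⟫ = ⟪x, B y⟫)
    (hell : ∀ v, rB * ‖v‖ ^ 2 ≤ ⟪B v, v⟫ ∧ ⟪B v, v⟫ ≤ RB * ‖v‖ ^ 2)
    (hinv1 : Binv.comp B = ContinuousLinearMap.id ℝ _)
    (hinv2 : B.comp Binv = ContinuousLinearMap.id ℝ _)
    (f u : lp (fun _ : J => ℝ) 2) (hu : B u = f)
    (β ω : ℝ) (hβ0 : 0 < β) (hβ : β < (Real.sqrt ‖B‖)⁻¹)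
    (hω0 : 0 < ω)
    (hω : ω ≤ (Real.sqrt (‖B‖ * ‖Binv‖))⁻¹ * Real.sqrt (1 - ‖B‖ * β ^ 2))
    (w : lp (fun _ : J => ℝ) 2) (Λ₀ : Finset J)
    (hwsupp : ∀ i : J, i ∉ Λ₀ → w i = 0) :
    ∀ Λbar : Finset J,
      (∃ v : lp (fun _ : J => ℝ) 2, (∀ i : J, i ∉ Λbar → v i = 0) ∧
          ‖u - v‖ ≤ β * Real.sqrt ⟪B (u - w), u - w⟫) →
      (ω * ‖B w - f‖ ≤ ‖restr (↑(Λ₀ ∪ Λbar)) (B w - f)‖ ∧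
        ((Λ₀ ∪ Λbar) \ Λ₀).card ≤ Λbar.card) ∧
      ∀ Λ : Finset J, Λ₀ ⊆ Λ →
        ω * ‖B w - f‖ ≤ ‖restr (↑Λ) (B w - f)‖ →
        (∀ Λ' : Finset J, Λ₀ ⊆ Λ' →
            ω * ‖B w - f‖ ≤ ‖restr (↑Λ') (B w - f)‖ → Λ.card ≤ Λ'.card) →
        (Λ \ Λ₀).card ≤ Λbar.card := by
  intro Λbar hex
  obtain ⟨v, hvsupp, hvβ⟩ := hex
  -- basic positivity facts
  have hBpos : ∀ x, 0 ≤ ⟪B x, x⟫ := fun x =>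
    le_trans (by positivity) (hell x).1
  have hB_cs := sym_norm_sq_le B hsa hBpos
  have hBsym : ∀ a b : lp (fun _ : J => ℝ) 2, ⟪B a, b⟫ = ⟪B b, a⟫ := fun a b => by
    rw [hsa, real_inner_comm]
  have hBinvB : ∀ y, B (Binv y) = y := fun y => by
    have := ContinuousLinearMap.ext_iff.mp hinv2 y
    simpa using this
  have hBBinv : ∀ x, Binv (B x) = x := fun x => by
    have := ContinuousLinearMap.ext_iff.mp hinv1 x
    simpa using this
  have hsym' : ∀ x y, ⟪Binv x, y⟫ = ⟪x, Binv y⟫ := by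
    intro x y
    calc ⟪Binv x, y⟫ = ⟪Binv x, B (Binv y)⟫ := by rw [hBinvB]
      _ = ⟪B (Binv x), Binv y⟫ := (hsa _ _).symm
      _ = ⟪x, Binv y⟫ := by rw [hBinvB]
  have hpos' : ∀ y, 0 ≤ ⟪Binv y, y⟫ := by
    intro y
    calc (0:ℝ) ≤ ⟪B (Binv y), Binv y⟫ := hBpos _
      _ = ⟪Binv y, y⟫ := by rw [real_inner_comm, hBinvB]
  have hBinv_cs := sym_norm_sq_le Binv hsym' hpos'
  have hlow : ∀ x, ‖x‖ ^ 2 ≤ ‖Binv‖ * ⟪B x, x⟫ := by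
    intro x
    have h := hBinv_cs (B x)
    rw [hBBinv] at h
    have e : ⟪x, B x⟫ = ⟪B x, x⟫ := real_inner_comm _ _
    rw [← e]
    exact h
  have hBnormpos : 0 < ‖B‖ := by
    have h := hβ0.trans hβ
    have := inv_pos.mp h
    exact Real.sqrt_pos.mp this
  have hBinvnormpos : 0 < ‖Binv‖ := by
    rcases (norm_nonneg Binv).lt_or_eq with h | h
    · exact h
    · exfalso
      rw [← h, mul_zero, Real.sqrt_zero, inv_zero, zero_mul] at hω
      linarith
  have hs : 0 < Real.sqrt ‖B‖ := Real.sqrt_pos.mpr hBnormpos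
  have hβs : β * Real.sqrt ‖B‖ < 1 := by
    calc β * Real.sqrt ‖B‖ < (Real.sqrt ‖B‖)⁻¹ * Real.sqrt ‖B‖ :=
        mul_lt_mul_of_pos_right hβ hs
      _ = 1 := inv_mul_cancel₀ hs.ne'
  have hc : ‖B‖ * β ^ 2 < 1 := by
    nlinarith [hβs, Real.sq_sqrt hBnormpos.le, mul_pos hβ0 hs]
  have hc0 : 0 ≤ 1 - ‖B‖ * β ^ 2 := by linarith
  have hK : 0 < ‖B‖ * ‖Binv‖ := mul_pos hBnormpos hBinvnormpos
  have hsK : 0 < Real.sqrt (‖B‖ * ‖Binv‖) := Real.sqrt_pos.mpr hK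
  have homega : ω ^ 2 * (‖B‖ * ‖Binv‖) ≤ 1 - ‖B‖ * β ^ 2 := by
    have h2 : ω * Real.sqrt (‖B‖ * ‖Binv‖) ≤ Real.sqrt (1 - ‖B‖ * β ^ 2) := by
      calc ω * Real.sqrt (‖B‖ * ‖Binv‖)
          ≤ ((Real.sqrt (‖B‖ * ‖Binv‖))⁻¹ * Real.sqrt (1 - ‖B‖ * β ^ 2)) *
              Real.sqrt (‖B‖ * ‖Binv‖) := mul_le_mul_of_nonneg_right hω hsK.le
        _ = Real.sqrt (1 - ‖B‖ * β ^ 2) := by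
            rw [mul_comm ((Real.sqrt (‖B‖ * ‖Binv‖))⁻¹) _, mul_assoc,
              inv_mul_cancel₀ hsK.ne', mul_one]
    have h3 := mul_self_le_mul_self (by positivity) h2
    have h4 := Real.mul_self_sqrt hc0
    have h5 := Real.mul_self_sqrt hK.le
    nlinarith [h3, h4, h5]
  -- residual facts
  have hr : B (w - u) = B w - f := by rw [map_sub, hu]
  have hrsq : ‖B w - f‖ ^ 2 ≤ ‖B‖ * ⟪B (u - w), u - w⟫ := by
    rw [← hr, show w - u = -(u - w) from (neg_sub u w).symm, map_neg, norm_neg]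
    exact hB_cs (u - w)
  have hE0 : 0 ≤ ⟪B (u - w), u - w⟫ := hBpos _
  have hgsq : ‖u - v‖ ^ 2 ≤ β ^ 2 * ⟪B (u - w), u - w⟫ := by
    have h3 := mul_self_le_mul_self (norm_nonneg (u - v)) hvβ
    have h4 := Real.mul_self_sqrt hE0
    nlinarith [h3, h4]
  have hgB : ⟪B (u - v), u - v⟫ ≤ ‖B‖ * (β ^ 2 * ⟪B (u - w), u - w⟫) := by
    calc ⟪B (u - v), u - v⟫ ≤ ‖B (u - v)‖ * ‖u - v‖ := real_inner_le_norm _ _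
      _ ≤ (‖B‖ * ‖u - v‖) * ‖u - v‖ := by gcongr; exact B.le_opNorm _
      _ = ‖B‖ * ‖u - v‖ ^ 2 := by ring
      _ ≤ ‖B‖ * (β ^ 2 * ⟪B (u - w), u - w⟫) :=
        mul_le_mul_of_nonneg_left hgsq (norm_nonneg _)
  have hmain : ω * ‖B w - f‖ ≤ ‖restr (↑(Λ₀ ∪ Λbar)) (B w - f)‖ := by
    rcases hE0.eq_or_lt with hE | hE
    · -- degenerate case : ‖B w - f‖ = 0
      have hE' : ⟪B (u - w), u - w⟫ = 0 := hE.symm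
      rw [hE', mul_zero] at hrsq
      have h2 : ‖B w - f‖ = 0 := by nlinarith [norm_nonneg (B w - f)]
      rw [h2, mul_zero]
      exact norm_nonneg _
    · have hD0 : 0 ≤ ⟪B (v - w), v - w⟫ := hBpos _
      have hDpos : 0 < ⟪B (v - w), v - w⟫ := by
        rcases hD0.eq_or_lt with h | h
        · exfalso
          have hd2 : ‖v - w‖ ^ 2 = 0 := by
            have h1 := (hell (v - w)).1
            have h2 := (hell (v - w)).2
            nlinarith [sq_nonneg ‖v - w‖]
          have hd0 : v - w = 0 := by
            have := pow_eq_zero_iff (n := 2) (by norm_num) |>.mp hd2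
            exact norm_eq_zero.mp this
          have huv : u - v = u - w := by
            rw [sub_eq_zero] at hd0; rw [hd0]
          rw [huv] at hgB
          nlinarith [hgB, hc, hE]
        · exact h
      have hexp : ⟪B (u - v), u - v⟫ =
          ⟪B (u - w), u - w⟫ - 2 * ⟪B (u - w), v - w⟫ + ⟪B (v - w), v - w⟫ := by
        simp only [map_sub, inner_sub_left, inner_sub_right]
        simp only [hBsym v u, hBsym w u, hBsym w v]
        ring
      -- the test vector z
      obtain ⟨z, hzsupp, hzZ, hzr⟩ :
          ∃ z : lp (fun _ : J => ℝ) 2,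
            (∀ i ∉ ((Λ₀ ∪ Λbar : Finset J) : Set J), z i = 0) ∧
            (1 - ‖B‖ * β ^ 2) * ⟪B (u - w), u - w⟫ ≤ ⟪B z, z⟫ ∧
            ⟪B w - f, z⟫ = -⟪B z, z⟫ := by
        set T := ⟪B (u - w), v - w⟫ with hT
        set D := ⟪B (v - w), v - w⟫ with hD
        refine ⟨(T / D) • (v - w), ?_, ?_, ?_⟩
        · intro i hi
          have hi' : i ∉ (Λ₀ ∪ Λbar : Finset J) := by simpa using hi
          have h1 : w i = 0 := hwsupp i fun h => hi' (Finset.mem_union_left _ h)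
          have h2 : v i = 0 := hvsupp i fun h => hi' (Finset.mem_union_right _ h)
          have h3 : ((T / D) • (v - w) : lp (fun _ : J => ℝ) 2) i
              = (T / D) * (v i - w i) := by
            rw [lp.coeFn_smul, Pi.smul_apply, lp.coeFn_sub, Pi.sub_apply]
            rfl
          rw [h3, h1, h2]
          ring
        · have hZz : ⟪B ((T / D) • (v - w) : lp (fun _ : J => ℝ) 2), (T / D) • (v - w)⟫
              = T / D * (T / D) * D := by
            rw [map_smul, real_inner_smul_left, real_inner_smul_right]
            ring
          rw [hZz]
          have h2 : ⟪B (u - w), u - w⟫ - 2 * T + D ≤ ‖B‖ * (β ^ 2 * ⟪B (u - w), u - w⟫) := by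
            rw [← hexp]; exact hgB
          have := key_arith (⟪B (u - w), u - w⟫) T D (‖B‖ * (β ^ 2 * ⟪B (u - w), u - w⟫))
            hDpos h2
          calc (1 - ‖B‖ * β ^ 2) * ⟪B (u - w), u - w⟫
              = ⟪B (u - w), u - w⟫ - ‖B‖ * (β ^ 2 * ⟪B (u - w), u - w⟫) := by ring
            _ ≤ T / D * (T / D) * D := this
        · have hZz : ⟪B ((T / D) • (v - w) : lp (fun _ : J => ℝ) 2), (T / D) • (v - w)⟫
              = T / D * (T / D) * D := by
            rw [map_smul, real_inner_smul_left, real_inner_smul_right]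
            ring
          have hBz : ⟪B w - f, ((T / D) • (v - w) : lp (fun _ : J => ℝ) 2)⟫
              = -(T / D * T) := by
            rw [← hr, show w - u = -(u - w) from (neg_sub u w).symm, map_neg,
              inner_neg_left, real_inner_smul_right, ← hT]
          rw [hBz, hZz]
          have : T / D * T = T / D * (T / D) * D := by
            field_simp
          rw [this]
      have hZpos : 0 < ⟪B z, z⟫ :=
        lt_of_lt_of_le (by nlinarith [hE, hc]) hzZ
      have hCS : ⟪B z, z⟫ ≤ ‖restr (↑(Λ₀ ∪ Λbar)) (B w - f)‖ * ‖z‖ := by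
        have habs := abs_real_inner_le_norm (restr (↑(Λ₀ ∪ Λbar)) (B w - f)) z
        rw [inner_restr' _ _ _ hzsupp, hzr, abs_neg, abs_of_pos hZpos] at habs
        exact habs
      exact dorfler_arith ω ‖B‖ ‖Binv‖ (1 - ‖B‖ * β ^ 2) (⟪B (u - w), u - w⟫)
        (⟪B z, z⟫) (‖restr (↑(Λ₀ ∪ Λbar)) (B w - f)‖) (‖B w - f‖) (‖z‖)
        hBinvnormpos hE0 hω0.le (norm_nonneg _) (norm_nonneg _) (norm_nonneg _)
        homega hrsq hzZ hZpos hCS (hlow z)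
  refine ⟨⟨hmain, ?_⟩, ?_⟩
  · refine Finset.card_le_card ?_
    intro x hx
    rw [Finset.mem_sdiff] at hx
    rcases Finset.mem_union.mp hx.1 with h | h
    · exact absurd h hx.2
    · exact h
  · intro Λ hΛ₀ hdorf hmin
    have h1 := hmin (Λ₀ ∪ Λbar) Finset.subset_union_left hmain
    have h2 : (Λ \ Λ₀).card = Λ.card - Λ₀.card := Finset.card_sdiff_of_subset hΛ₀
    have h3 : (Λ₀ ∪ Λbar).card ≤ Λ₀.card + Λbar.card := Finset.card_union_le _ _
    have h4 : Λ₀.card ≤ Λ.card := Finset.card_le_card hΛ₀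
    omega
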